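/- arXiv:1609.01645 — 2 statements merged into one kernel-verified Lean document; each statement's English description precedes it below -/
import Mathlib

section
/- Let φ∈Ψ satisfy limsup_{u→∞} φ(u)/√u = ∞. Then there exists a continuous function F on G² such that limsup_{m→∞} (1/m) Σ_{l=1}^{m} ( exp( φ(|S_{l,l}^κ(F;0,0) − F(0,0)|) ) − 1 ) = +∞, where 0 denotes the null element of G. -/
open MeasureTheory Filter

noncomputable section

/-- The Walsh group `G`: countable product of `ℤ/2ℤ`. -/
abbrev G : Type := ℕ → ZMod 2

instance : TopologicalSpace (ZMod 2) := ⊥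
instance : DiscreteTopology (ZMod 2) := ⟨rfl⟩
instance : MeasurableSpace (ZMod 2) := ⊤
instance : BorelSpace (ZMod 2) := ⟨borel_eq_top_of_discrete.symm⟩
instance : IsTopologicalAddGroup (ZMod 2) where
  continuous_add := continuous_of_discreteTopology
  continuous_neg := continuous_of_discreteTopology

/-- The normalized Haar (probability) measure on the Walsh group. -/
def μG : Measure G := Measure.addHaarMeasure ⊤

/-- The `k`-th Rademacher function. -/
def rademacher (k : ℕ) (x : G) : ℝ := (-1 : ℝ) ^ (x k).val

/-- The Walsh-Paley functions. -/
def walsh (n : ℕ) (x : G) : ℝ :=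
  ∏ k ∈ Finset.range n.size, if n.testBit k then rademacher k x else 1

/-- The Walsh-Kaczmarz functions. -/
def kaczmarz (n : ℕ) (x : G) : ℝ :=
  if n = 0 then 1 else
    rademacher (Nat.log 2 n) x *
      ∏ k ∈ Finset.range (Nat.log 2 n),
        if n.testBit k then rademacher (Nat.log 2 n - 1 - k) x else 1

/-- Walsh-Paley Dirichlet kernel. -/
def walshDirichlet (n : ℕ) (x : G) : ℝ := ∑ k ∈ Finset.range n, walsh k x

/-- Walsh-Kaczmarz Dirichlet kernel. -/
def kaczDirichlet (n : ℕ) (x : G) : ℝ := ∑ k ∈ Finset.range n, kaczmarz k x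

/-- 1D Walsh-Kaczmarz-Fourier coefficient. -/
def kaczCoeff (f : G → ℝ) (k : ℕ) : ℝ := ∫ x, f x * kaczmarz k x ∂μG

/-- 1D Walsh-Kaczmarz-Fourier partial sum `S_n^κ(f;x)`. -/
def kaczPartialSum (n : ℕ) (f : G → ℝ) (x : G) : ℝ :=
  ∑ k ∈ Finset.range n, kaczCoeff f k * kaczmarz k x

/-- Product measure on `G²`. -/
def μG2 : Measure (G × G) := μG.prod μG

/-- 2D Walsh-Kaczmarz-Fourier coefficient. -/
def kaczCoeff2 (f : G × G → ℝ) (k i : ℕ) : ℝ :=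
  ∫ p, f p * kaczmarz k p.1 * kaczmarz i p.2 ∂μG2

/-- 2D Walsh-Kaczmarz-Fourier partial sum `S_{n,m}^κ(f;x,y)`. -/
def kaczPartialSum2 (n m : ℕ) (f : G × G → ℝ) (p : G × G) : ℝ :=
  ∑ k ∈ Finset.range n, ∑ i ∈ Finset.range m,
    kaczCoeff2 f k i * kaczmarz k p.1 * kaczmarz i p.2

/-- Supremum norm on `G²`. -/
def supNorm (f : G × G → ℝ) : ℝ := ⨆ p : G × G, |f p|

/-- `E_l^{(1)}(f)`: partial best approximation in the first variable. -/
def E1 (f : G × G → ℝ) (l : ℕ) : ℝ :=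
  sInf { e : ℝ | ∃ α : ℕ → G → ℝ, (∀ j, Continuous (α j)) ∧
    e = supNorm (fun p => f p - ∑ j ∈ Finset.range l, α j p.2 * kaczmarz j p.1) }

/-- `E_r^{(2)}(f)`: partial best approximation in the second variable. -/
def E2 (f : G × G → ℝ) (r : ℕ) : ℝ :=
  sInf { e : ℝ | ∃ β : ℕ → G → ℝ, (∀ j, Continuous (β j)) ∧
    e = supNorm (fun p => f p - ∑ j ∈ Finset.range r, β j p.1 * kaczmarz j p.2) }

/-- `E_{l,r}(f)`: best approximation by 2D Walsh-Kaczmarz polynomials. -/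
def Ebox (f : G × G → ℝ) (l r : ℕ) : ℝ :=
  sInf { e : ℝ | ∃ c : ℕ → ℕ → ℝ,
    e = supNorm (fun p => f p -
      ∑ k ∈ Finset.range l, ∑ i ∈ Finset.range r,
        c k i * kaczmarz k p.1 * kaczmarz i p.2) }

/-- The class `Ψ`: increasing on `[0,∞)`, `ψ(0) = lim_{u→0+} ψ(u) = 0`. -/
def PsiClass (ψ : ℝ → ℝ) : Prop :=
  MonotoneOn ψ (Set.Ici 0) ∧ ψ 0 = 0 ∧
    Tendsto ψ (nhdsWithin 0 (Set.Ioi 0)) (nhds 0)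

/-- The coordinate-reversing transformation `τ_A`. -/
def tau (A : ℕ) (x : G) : G := fun i => if i < A then x (A - 1 - i) else x i

end

noncomputable section Aux

/-! ### Auxiliary measure-theoretic facts -/

instance : IsProbabilityMeasure μG := by
  constructor
  rw [μG, ← TopologicalSpace.PositiveCompacts.coe_top (α := G)]
  exact Measure.addHaarMeasure_self

instance : μG.IsAddLeftInvariant := Measure.isAddLeftInvariant_addHaarMeasure ⊤

instance : IsProbabilityMeasure μG2 := by
  rw [μG2]; infer_instance

lemma integrable_of_cont (f : G → ℝ) (hf : Continuous f) : Integrable f μG :=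
  hf.integrable_of_hasCompactSupport (HasCompactSupport.of_compactSpace f)

lemma integrable_of_cont2 (f : G × G → ℝ) (hf : Continuous f) : Integrable f μG2 :=
  hf.integrable_of_hasCompactSupport (HasCompactSupport.of_compactSpace f)

/-! ### Characters -/

/-- character indexed by finite set of coordinates -/
def wchar (s : Finset ℕ) (x : G) : ℝ := ∏ i ∈ s, (-1 : ℝ) ^ (x i).val

lemma wchar_continuous (s : Finset ℕ) : Continuous (wchar s) := by
  apply continuous_finset_prod
  intro i _
  exact (continuous_of_discreteTopology (α := ZMod 2)
    (f := fun v : ZMod 2 => ((-1:ℝ)) ^ v.val)).comp (continuous_apply i)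

lemma neg_one_pow_val_add (u v : ZMod 2) :
    ((-1:ℝ)) ^ ((u + v).val) = (-1:ℝ) ^ u.val * (-1:ℝ) ^ v.val := by
  rw [ZMod.val_add]
  have hu : u.val = 0 ∨ u.val = 1 := by have := ZMod.val_lt u; omega
  have hv : v.val = 0 ∨ v.val = 1 := by have := ZMod.val_lt v; omega
  rcases hu with hu | hu <;> rcases hv with hv | hv <;> simp [hu, hv]

lemma wchar_add (s : Finset ℕ) (a x : G) :
    wchar s (a + x) = wchar s a * wchar s x := by
  rw [wchar, wchar, wchar, ← Finset.prod_mul_distrib]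
  exact Finset.prod_congr rfl fun i _ => neg_one_pow_val_add (a i) (x i)

lemma wchar_abs (s : Finset ℕ) (x : G) : |wchar s x| = 1 := by
  rw [wchar, Finset.abs_prod]
  rw [Finset.prod_eq_one]
  intro i _
  rw [abs_pow, abs_neg, abs_one, one_pow]

lemma wchar_zero (s : Finset ℕ) : wchar s 0 = 1 := by
  rw [wchar, Finset.prod_eq_one]
  intro i _
  simp [Pi.zero_apply, ZMod.val_zero]

lemma wchar_mul (s t : Finset ℕ) (x : G) :
    wchar s x * wchar t x = wchar (symmDiff s t) x := by
  classical
  have h1 : wchar s x * wchar t x = wchar (s ∪ t) x * wchar (s ∩ t) x := by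
    rw [wchar, wchar, wchar, wchar, Finset.prod_union_inter]
  have h2 : s ∪ t = symmDiff s t ∪ (s ∩ t) := by
    ext i
    simp only [Finset.mem_union, Finset.mem_inter, Finset.mem_symmDiff]
    tauto
  have h3 : Disjoint (symmDiff s t) (s ∩ t) := by
    rw [Finset.disjoint_left]
    intro i hi hmem
    simp only [Finset.mem_symmDiff, Finset.mem_inter] at hi hmem
    tauto
  have h4 : wchar (s ∩ t) x * wchar (s ∩ t) x = 1 := by
    rcases (abs_eq (by norm_num : (0:ℝ) ≤ 1)).1 (wchar_abs (s ∩ t) x) with h | h <;>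
      rw [h] <;> norm_num
  rw [h1, h2, wchar, Finset.prod_union h3, ← wchar, ← wchar, mul_assoc, h4, mul_one]

/-- The key integral: nontrivial characters integrate to 0. -/
lemma integral_wchar (s : Finset ℕ) :
    ∫ x, wchar s x ∂μG = if s = ∅ then 1 else 0 := by
  by_cases hs : s = ∅
  · simp [hs, wchar]
  · simp only [hs, if_false]
    obtain ⟨j, hj⟩ := Finset.nonempty_iff_ne_empty.2 hs
    set a : G := fun i => if i = j then 1 else 0 with ha
    have hwa : wchar s a = -1 := by
      rw [wchar]
      rw [Finset.prod_eq_single j]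
      · simp [ha, show ((1:ZMod 2)).val = 1 from rfl]
      · intro i hi hij
        simp [ha, hij]
      · intro h; exact absurd hj h
    have := integral_add_left_eq_self (μ := μG) (wchar s) a
    have heq : ∀ x, wchar s (a + x) = - wchar s x := by
      intro x
      rw [wchar_add, hwa]; ring
    rw [show (fun x => wchar s (a + x)) = fun x => - wchar s x from funext heq] at this
    rw [integral_neg] at this
    linarith

/-! ### Kaczmarz functions as characters -/

/-- the set of coordinates of the character `κ_n` -/
def Sset (n : ℕ) : Finset ℕ :=
  if n = 0 then ∅ else
    insert (Nat.log 2 n)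
      (((Finset.range (Nat.log 2 n)).filter (fun k => n.testBit k)).image
        (fun k => Nat.log 2 n - 1 - k))

lemma not_mem_image_log (n : ℕ) :
    Nat.log 2 n ∉ ((Finset.range (Nat.log 2 n)).filter (fun k => n.testBit k)).image
      (fun k => Nat.log 2 n - 1 - k) := by
  intro h
  simp only [Finset.mem_image, Finset.mem_filter, Finset.mem_range] at h
  obtain ⟨k, ⟨hk, _⟩, hfk⟩ := h
  omega

lemma kacz_eq_wchar (n : ℕ) (x : G) : kaczmarz n x = wchar (Sset n) x := by
  by_cases hn : n = 0
  · simp [hn, kaczmarz, Sset, wchar]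
  · rw [kaczmarz, Sset, if_neg hn, if_neg hn, wchar,
      Finset.prod_insert (not_mem_image_log n)]
    congr 1
    rw [Finset.prod_image]
    · rw [Finset.prod_filter]
      rfl
    · intro k hk k' hk' h
      simp only [Finset.coe_filter, Finset.mem_coe, Finset.mem_filter, Finset.mem_range,
        Set.mem_setOf_eq] at hk hk' h
      omega

lemma testBit_log_self {n : ℕ} (hn : n ≠ 0) : n.testBit (Nat.log 2 n) = true := by
  set L := Nat.log 2 n with hL
  have h1 : 2 ^ L ≤ n := Nat.pow_log_le_self 2 hn
  have h2 : n < 2 ^ (L + 1) := Nat.lt_pow_succ_log_self (by norm_num) n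
  have hrep : n = 2 ^ L + (n - 2 ^ L) := by omega
  rw [hrep, Nat.testBit_two_pow_add_eq]
  have : (n - 2 ^ L) < 2 ^ L := by
    rw [pow_succ] at h2; omega
  rw [Nat.testBit_lt_two_pow this]
  rfl

lemma testBit_gt_log {n k : ℕ} (hk : Nat.log 2 n < k) : n.testBit k = false := by
  by_cases hn : n = 0
  · simp [hn]
  · apply Nat.testBit_lt_two_pow
    calc n < 2 ^ (Nat.log 2 n + 1) := Nat.lt_pow_succ_log_self (by norm_num) n
    _ ≤ 2 ^ k := Nat.pow_le_pow_right (by norm_num) (by omega)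

lemma mem_Sset_le {n i : ℕ} (h : i ∈ Sset n) : i ≤ Nat.log 2 n := by
  by_cases hn : n = 0
  · simp [hn, Sset] at h
  · rw [Sset, if_neg hn, Finset.mem_insert] at h
    rcases h with h | h
    · omega
    · simp only [Finset.mem_image, Finset.mem_filter, Finset.mem_range] at h
      obtain ⟨k, _, hfk⟩ := h
      omega

lemma log_mem_Sset {n : ℕ} (hn : n ≠ 0) : Nat.log 2 n ∈ Sset n := by
  rw [Sset, if_neg hn]; exact Finset.mem_insert_self _ _

lemma mem_Sset_iff {n k : ℕ} (hn : n ≠ 0) (hk : k < Nat.log 2 n) :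
    (Nat.log 2 n - 1 - k) ∈ Sset n ↔ n.testBit k = true := by
  set L := Nat.log 2 n with hL
  rw [Sset, if_neg hn, Finset.mem_insert]
  constructor
  · rintro (h | h)
    · omega
    · simp only [Finset.mem_image, Finset.mem_filter, Finset.mem_range] at h
      obtain ⟨k', ⟨hk', hb⟩, hfk⟩ := h
      have : k' = k := by omega
      rwa [this] at hb
  · intro hb
    right
    simp only [Finset.mem_image, Finset.mem_filter, Finset.mem_range]
    exact ⟨k, ⟨hk, hb⟩, rfl⟩

lemma Sset_inj {n m : ℕ} (h : Sset n = Sset m) : n = m := by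
  by_cases hn : n = 0 <;> by_cases hm : m = 0
  · omega
  · exfalso
    have := log_mem_Sset hm
    rw [← h] at this
    simp [hn, Sset] at this
  · exfalso
    have := log_mem_Sset hn
    rw [h] at this
    simp [hm, Sset] at this
  · have hLn : Nat.log 2 n = Nat.log 2 m := by
      have h1 : Nat.log 2 n ≤ Nat.log 2 m := mem_Sset_le (h ▸ log_mem_Sset hn)
      have h2 : Nat.log 2 m ≤ Nat.log 2 n := mem_Sset_le (h ▸ log_mem_Sset hm)
      omega
    apply Nat.eq_of_testBit_eq
    intro k
    rcases lt_trichotomy k (Nat.log 2 n) with hk | hk | hk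
    · have e1 := mem_Sset_iff hn hk
      have e2 := mem_Sset_iff hm (hLn ▸ hk)
      rw [← hLn] at e2
      rw [← h] at e2
      rw [Bool.eq_iff_iff, ← e1, ← e2]
    · rw [hk, testBit_log_self hn, hLn, testBit_log_self hm]
    · rw [testBit_gt_log hk, testBit_gt_log (by omega : Nat.log 2 m < k)]

lemma kacz_continuous (n : ℕ) : Continuous (kaczmarz n) := by
  rw [show kaczmarz n = wchar (Sset n) from funext (kacz_eq_wchar n)]
  exact wchar_continuous _

lemma kacz_abs (n : ℕ) (x : G) : |kaczmarz n x| = 1 := by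
  rw [kacz_eq_wchar]; exact wchar_abs _ _

lemma kacz_at_zero (n : ℕ) : kaczmarz n 0 = 1 := by
  rw [kacz_eq_wchar]; exact wchar_zero _

/-- Orthonormality of the Walsh-Kaczmarz system. -/
lemma integral_kacz_mul (n m : ℕ) :
    ∫ x, kaczmarz n x * kaczmarz m x ∂μG = if n = m then 1 else 0 := by
  have : (fun x => kaczmarz n x * kaczmarz m x)
      = wchar (symmDiff (Sset n) (Sset m)) := by
    funext x
    rw [kacz_eq_wchar, kacz_eq_wchar, wchar_mul]
  rw [this, integral_wchar]
  by_cases h : n = m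
  · subst h
    simp [symmDiff_self]
  · have : ¬ (symmDiff (Sset n) (Sset m) = ∅) := by
      intro he
      exact h (Sset_inj ((symmDiff_eq_bot (a := Sset n) (b := Sset m)).1 he))
    simp [h, this]

end Aux
noncomputable section Construction

/-! ### The building-block polynomials -/

def ufun (A t : ℕ) (x : G) : ℝ :=
  ∏ k ∈ Finset.range A, if t.testBit k then rademacher (A - 1 - k) x else 1

lemma rademacher_abs (k : ℕ) (x : G) : |rademacher k x| = 1 := by
  rw [rademacher, abs_pow, abs_neg, abs_one, one_pow]

lemma rademacher_cases (k : ℕ) (x : G) : rademacher k x = 1 ∨ rademacher k x = -1 := by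
  rw [rademacher]
  rcases Nat.even_or_odd ((x k).val) with h | h
  · left; exact h.neg_one_pow
  · right; exact h.neg_one_pow

lemma ufun_abs (A t : ℕ) (x : G) : |ufun A t x| = 1 := by
  rw [ufun, Finset.abs_prod, Finset.prod_eq_one]
  intro k _
  by_cases h : t.testBit k
  · rw [if_pos h, rademacher_abs]
  · rw [if_neg h, abs_one]

lemma log_block {A t : ℕ} (ht : t < 2 ^ A) : Nat.log 2 (2 ^ A + t) = A :=
  Nat.log_eq_of_pow_le_of_lt_pow (Nat.le_add_right _ _) (by rw [pow_succ]; omega)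

lemma kacz_block {A t : ℕ} (ht : t < 2 ^ A) (x : G) :
    kaczmarz (2 ^ A + t) x = rademacher A x * ufun A t x := by
  have h2 : (0:ℕ) < 2 ^ A := Nat.pow_pos (by norm_num)
  rw [kaczmarz, if_neg (by omega), log_block ht, ufun]
  congr 1
  apply Finset.prod_congr rfl
  intro k hk
  rw [Nat.testBit_two_pow_add_gt (Finset.mem_range.1 hk)]

lemma ufun_succ (A t : ℕ) (x : G) :
    ufun (A + 1) t x = ufun A (t / 2) x * (if t % 2 = 1 then rademacher A x else 1) := by
  rw [ufun, Finset.prod_range_succ']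
  congr 1
  · rw [ufun]
    apply Finset.prod_congr rfl
    intro k _
    rw [Nat.testBit_add_one]
    have : A + 1 - 1 - (k + 1) = A - 1 - k := by omega
    rw [this]
  · rw [Nat.testBit_zero]
    have : A + 1 - 1 - 0 = A := by omega
    rw [this]
    by_cases h : t % 2 = 1
    · simp [h]
    · simp [h]

/-! ### The coefficient recursion -/

def rhostar : ℕ → ℕ
  | 0 => 0
  | (A + 1) => 2 * rhostar A + (A % 2)

def ec : ℕ → ℕ → ℝ
  | 0, _ => 0
  | (A + 1), t =>
    if A = 0 then 0 else
      (ec A (t / 2) + (if t / 2 = rhostar A then (if t % 2 = 0 then 1 else -1) else 0)) / 2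

lemma rhostar_lt (A : ℕ) : rhostar A < 2 ^ A := by
  induction A with
  | zero => simp [rhostar]
  | succ A ih =>
    have h : A % 2 ≤ 1 := by omega
    have h2 : (2:ℕ) ^ (A + 1) = 2 * 2 ^ A := by ring
    rw [rhostar, h2]
    omega

lemma ec_one (t : ℕ) : ec 1 t = 0 := by simp [ec]

lemma ec_even {A : ℕ} (hA : 1 ≤ A) (t : ℕ) :
    ec (A + 1) (2 * t) = (ec A t + (if t = rhostar A then 1 else 0)) / 2 := by
  rw [ec, if_neg (by omega)]
  have h1 : 2 * t / 2 = t := by omega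
  have h2 : 2 * t % 2 = 0 := by omega
  rw [h1, h2, if_pos rfl]

lemma ec_odd {A : ℕ} (hA : 1 ≤ A) (t : ℕ) :
    ec (A + 1) (2 * t + 1) = (ec A t - (if t = rhostar A then 1 else 0)) / 2 := by
  rw [ec, if_neg (by omega)]
  have h1 : (2 * t + 1) / 2 = t := by omega
  have h2 : ¬((2 * t + 1) % 2 = 0) := by omega
  rw [h1, if_neg h2]
  by_cases h : t = rhostar A <;> simp [h] <;> ring

lemma ec_abs (A t : ℕ) : |ec A t| ≤ 1 := by
  induction A generalizing t with
  | zero => simp [ec]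
  | succ A ih =>
    by_cases hA : A = 0
    · rw [ec, if_pos hA]; norm_num
    · rw [ec, if_neg hA]
      have h := ih (t / 2)
      have hd : |(if t / 2 = rhostar A then (if t % 2 = 0 then (1:ℝ) else -1) else 0)| ≤ 1 := by
        by_cases h1 : t / 2 = rhostar A
        · by_cases h2 : t % 2 = 0 <;> simp [h1, h2]
        · simp [h1]
      rw [abs_div, abs_of_pos (by norm_num : (0:ℝ) < 2)]
      have := abs_add_le (ec A (t / 2))
        (if t / 2 = rhostar A then (if t % 2 = 0 then (1:ℝ) else -1) else 0)
      linarith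

/-- Partial sums of the coefficients. -/
def Pp (A s : ℕ) : ℝ := ∑ t ∈ Finset.range s, ec A t

lemma sum_range_two_mul (n : ℕ) (f : ℕ → ℝ) :
    ∑ t ∈ Finset.range (2 * n), f t = ∑ t ∈ Finset.range n, (f (2 * t) + f (2 * t + 1)) := by
  induction n with
  | zero => simp
  | succ n ih =>
    have : 2 * (n + 1) = (2 * n + 1) + 1 := by ring
    rw [this, Finset.sum_range_succ, Finset.sum_range_succ, ih, Finset.sum_range_succ]
    ring

lemma Pp_even {A : ℕ} (hA : 1 ≤ A) (s : ℕ) : Pp (A + 1) (2 * s) = Pp A s := by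
  rw [Pp, Pp, sum_range_two_mul]
  apply Finset.sum_congr rfl
  intro t _
  rw [ec_even hA, ec_odd hA]
  ring

def xx (A : ℕ) : ℝ := ec A (rhostar A)
def yy (A : ℕ) : ℝ := Pp A (rhostar A)
def TT (A : ℕ) : ℝ := Pp A (2 ^ A)

lemma rhostar_one : rhostar 1 = 0 := by simp [rhostar]

lemma xx_one : xx 1 = 0 := by rw [xx, ec_one]

lemma yy_one : yy 1 = 0 := by rw [yy, rhostar_one, Pp]; simp

lemma xx_rec_even {A : ℕ} (hA : 1 ≤ A) (h : A % 2 = 0) : xx (A + 1) = (xx A + 1) / 2 := by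
  rw [xx, xx, show rhostar (A + 1) = 2 * rhostar A by simp [rhostar, h],
    ec_even hA, if_pos rfl]

lemma xx_rec_odd {A : ℕ} (hA : 1 ≤ A) (h : A % 2 = 1) : xx (A + 1) = (xx A - 1) / 2 := by
  rw [xx, xx, show rhostar (A + 1) = 2 * rhostar A + 1 by rw [rhostar, h],
    ec_odd hA, if_pos rfl]

lemma yy_rec_even {A : ℕ} (hA : 1 ≤ A) (h : A % 2 = 0) : yy (A + 1) = yy A := by
  rw [yy, yy, show rhostar (A + 1) = 2 * rhostar A by simp [rhostar, h], Pp_even hA]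

lemma yy_rec_odd {A : ℕ} (hA : 1 ≤ A) (h : A % 2 = 1) :
    yy (A + 1) = yy A + (xx A + 1) / 2 := by
  rw [yy, yy, show rhostar (A + 1) = 2 * rhostar A + 1 by rw [rhostar, h], Pp,
    Finset.sum_range_succ, ← Pp, Pp_even hA, ec_even hA, if_pos rfl, ← xx]

lemma TT_zero {A : ℕ} (hA : 1 ≤ A) : TT A = 0 := by
  induction A with
  | zero => omega
  | succ A ih =>
    by_cases h : A = 0
    · subst h
      rw [TT, Pp, Finset.sum_congr rfl (fun t _ => ec_one t)]
      simp
    · rw [TT, show (2:ℕ) ^ (A + 1) = 2 * 2 ^ A by ring, Pp_even (by omega), ← TT]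
      exact ih (by omega)

lemma xx_odd_nonneg (B : ℕ) : 0 ≤ xx (2 * B + 1) := by
  induction B with
  | zero => rw [show 2 * 0 + 1 = 1 by ring, xx_one]
  | succ B ih =>
    have h1 : xx (2 * B + 2) = (xx (2 * B + 1) - 1) / 2 :=
      xx_rec_odd (by omega) (by omega)
    have h2 : xx (2 * B + 3) = (xx (2 * B + 2) + 1) / 2 :=
      xx_rec_even (by omega) (by omega)
    have : 2 * (B + 1) + 1 = 2 * B + 3 := by ring
    rw [this, h2, h1]
    linarith

lemma xx_ge_neg_one (A : ℕ) : -1 ≤ xx A := by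
  have := ec_abs A (rhostar A)
  rw [← xx] at this
  cases abs_le.1 this
  assumption

lemma yy_odd_ge (B : ℕ) : (B : ℝ) / 2 ≤ yy (2 * B + 1) := by
  induction B with
  | zero => rw [show 2 * 0 + 1 = 1 by ring, yy_one]; norm_num
  | succ B ih =>
    have h1 : yy (2 * B + 2) = yy (2 * B + 1) + (xx (2 * B + 1) + 1) / 2 :=
      yy_rec_odd (by omega) (by omega)
    have h2 : yy (2 * B + 3) = yy (2 * B + 2) :=
      yy_rec_even (by omega) (by omega)
    have h3 : 2 * (B + 1) + 1 = 2 * B + 3 := by ring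
    have h4 := xx_odd_nonneg B
    rw [h3, h2, h1]
    push_cast
    linarith

end Construction
noncomputable section Bounds

/-! ### Sup-norm bound for the building blocks -/

def qfun (A : ℕ) (x : G) : ℝ := ∑ t ∈ Finset.range (2 ^ A), ec A t * ufun A t x

def pfun (A : ℕ) (x : G) : ℝ := ∑ t ∈ Finset.range (2 ^ A), ec A t * kaczmarz (2 ^ A + t) x

lemma pfun_eq (A : ℕ) (x : G) : pfun A x = rademacher A x * qfun A x := by
  rw [pfun, qfun, Finset.mul_sum]
  apply Finset.sum_congr rfl
  intro t ht
  rw [kacz_block (Finset.mem_range.1 ht)]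
  ring

lemma qfun_bound {A : ℕ} (hA : 1 ≤ A) (x : G) : |qfun A x| ≤ 1 := by
  induction A with
  | zero => omega
  | succ A ih =>
    by_cases hA0 : A = 0
    · subst hA0
      rw [qfun]
      have : ∀ t ∈ Finset.range (2 ^ 1), ec 1 t * ufun 1 t x = 0 := by
        intro t _; rw [ec_one]; ring
      rw [Finset.sum_congr rfl this]
      simp
    · have hA1 : 1 ≤ A := by omega
      have key : qfun (A + 1) x = ∑ t ∈ Finset.range (2 ^ A),
          (((ec A t + (if t = rhostar A then 1 else 0)) / 2) * ufun A t x
          + ((ec A t - (if t = rhostar A then 1 else 0)) / 2)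
              * (ufun A t x * rademacher A x)) := by
        rw [qfun, show (2:ℕ) ^ (A + 1) = 2 * 2 ^ A by ring, sum_range_two_mul]
        apply Finset.sum_congr rfl
        intro t _
        rw [ec_even hA1, ec_odd hA1]
        congr 2
        · rw [ufun_succ]
          have h1 : 2 * t / 2 = t := by omega
          have h2 : ¬(2 * t % 2 = 1) := by omega
          rw [h1, if_neg h2, mul_one]
        · rw [ufun_succ]
          have h1 : (2 * t + 1) / 2 = t := by omega
          have h2 : (2 * t + 1) % 2 = 1 := by omega
          rw [h1, if_pos h2]
      rcases rademacher_cases A x with hr | hr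
      · have : qfun (A + 1) x = qfun A x := by
          rw [key, qfun]
          apply Finset.sum_congr rfl
          intro t _
          rw [hr]; ring
        rw [this]
        exact ih hA1
      · have : qfun (A + 1) x = ufun A (rhostar A) x := by
          rw [key]
          have : ∀ t ∈ Finset.range (2 ^ A),
              (((ec A t + (if t = rhostar A then 1 else 0)) / 2) * ufun A t x
              + ((ec A t - (if t = rhostar A then 1 else 0)) / 2)
                  * (ufun A t x * rademacher A x))
              = (if t = rhostar A then ufun A t x else 0) := by
            intro t _
            rw [hr]
            by_cases h : t = rhostar A <;> simp [h] <;> ring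
          rw [Finset.sum_congr rfl this, Finset.sum_ite_eq',
            if_pos (Finset.mem_range.2 (rhostar_lt A))]
        rw [this, ufun_abs]

lemma pfun_abs {A : ℕ} (hA : 1 ≤ A) (x : G) : |pfun A x| ≤ 1 := by
  rw [pfun_eq, abs_mul, rademacher_abs, one_mul]
  exact qfun_bound hA x

lemma pfun_zero {A : ℕ} (hA : 1 ≤ A) : pfun A 0 = 0 := by
  have : ∀ t ∈ Finset.range (2 ^ A), ec A t * kaczmarz (2 ^ A + t) 0 = ec A t := by
    intro t _
    rw [kacz_at_zero, mul_one]
  rw [pfun, Finset.sum_congr rfl this, ← Pp, ← TT]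
  exact TT_zero hA

lemma pfun_cont (A : ℕ) : Continuous (pfun A) := by
  apply continuous_finset_sum
  intro t _
  exact continuous_const.mul (kacz_continuous _)

/-! ### Fourier coefficients of the building blocks -/

/-- coefficients of `pfun A` -/
def cc (A k : ℕ) : ℝ := if 2 ^ A ≤ k ∧ k < 2 ^ (A + 1) then ec A (k - 2 ^ A) else 0

lemma integral_pfun_kacz (A k : ℕ) :
    ∫ x, pfun A x * kaczmarz k x ∂μG = cc A k := by
  have h1 : ∀ x, pfun A x * kaczmarz k x
      = ∑ t ∈ Finset.range (2 ^ A), ec A t * (kaczmarz (2 ^ A + t) x * kaczmarz k x) := by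
    intro x
    rw [pfun, Finset.sum_mul]
    apply Finset.sum_congr rfl
    intro t _
    ring
  rw [show (fun x => pfun A x * kaczmarz k x) = _ from funext h1]
  rw [integral_finset_sum]
  swap
  · intro t _
    apply Integrable.const_mul
    exact integrable_of_cont _ ((kacz_continuous _).mul (kacz_continuous _))
  have h2 : ∀ t ∈ Finset.range (2 ^ A),
      ∫ x, ec A t * (kaczmarz (2 ^ A + t) x * kaczmarz k x) ∂μG
      = ec A t * (if 2 ^ A + t = k then 1 else 0) := by
    intro t _
    rw [integral_const_mul, integral_kacz_mul]
  rw [Finset.sum_congr rfl h2]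
  by_cases hk : 2 ^ A ≤ k ∧ k < 2 ^ (A + 1)
  · have hklt : k - 2 ^ A < 2 ^ A := by
      have := hk.1
      have := hk.2
      have : (2:ℕ) ^ (A + 1) = 2 * 2 ^ A := by ring
      omega
    have h3 : ∀ t ∈ Finset.range (2 ^ A),
        ec A t * (if 2 ^ A + t = k then (1:ℝ) else 0)
        = if t = k - 2 ^ A then ec A t else 0 := by
      intro t ht
      by_cases h : t = k - 2 ^ A
      · rw [if_pos h, if_pos (by omega), mul_one]
      · rw [if_neg h, if_neg (by omega), mul_zero]
    rw [Finset.sum_congr rfl h3, Finset.sum_ite_eq', if_pos (Finset.mem_range.2 hklt),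
      cc, if_pos hk]
  · have h3 : ∀ t ∈ Finset.range (2 ^ A),
        ec A t * (if 2 ^ A + t = k then (1:ℝ) else 0) = 0 := by
      intro t ht
      have ht' : t < 2 ^ A := Finset.mem_range.1 ht
      rw [if_neg ?hup, mul_zero]
      case hup =>
        intro he
        apply hk
        constructor
        · omega
        · have : (2:ℕ) ^ (A + 1) = 2 * 2 ^ A := by ring
          omega
    rw [Finset.sum_congr rfl h3, cc, if_neg hk]
    simp

lemma sum_cc_low {A l : ℕ} (h : l ≤ 2 ^ A) :
    ∑ k ∈ Finset.range l, cc A k = 0 := by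
  apply Finset.sum_eq_zero
  intro k hk
  have := Finset.mem_range.1 hk
  rw [cc, if_neg (by omega)]

lemma sum_cc_mid {A s : ℕ} (hs : s ≤ 2 ^ A) :
    ∑ k ∈ Finset.range (2 ^ A + s), cc A k = Pp A s := by
  rw [Finset.sum_range_add, sum_cc_low (le_refl _), zero_add, Pp]
  apply Finset.sum_congr rfl
  intro j hj
  have hjs := Finset.mem_range.1 hj
  rw [cc, if_pos ?cond]
  · congr 1
    omega
  case cond =>
    constructor
    · omega
    · have : (2:ℕ) ^ (A + 1) = 2 * 2 ^ A := by ring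
      omega

lemma sum_cc_high {A l : ℕ} (hA : 1 ≤ A) (h : 2 ^ (A + 1) ≤ l) :
    ∑ k ∈ Finset.range l, cc A k = 0 := by
  have hrep : l = 2 ^ (A + 1) + (l - 2 ^ (A + 1)) := by omega
  rw [hrep, Finset.sum_range_add]
  have h1 : ∑ k ∈ Finset.range (2 ^ (A + 1)), cc A k = 0 := by
    have : (2:ℕ) ^ (A + 1) = 2 ^ A + 2 ^ A := by ring
    rw [this, sum_cc_mid (le_refl _), ← TT, TT_zero hA]
  have h2 : ∑ j ∈ Finset.range (l - 2 ^ (A + 1)), cc A (2 ^ (A + 1) + j) = 0 := by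
    apply Finset.sum_eq_zero
    intro j _
    rw [cc, if_neg (by omega)]
  rw [h1, h2, add_zero]

end Bounds
noncomputable section TheFunction

/-! ### The function `F` -/

lemma cc_abs (A k : ℕ) : |cc A k| ≤ 1 := by
  rw [cc]
  by_cases h : 2 ^ A ≤ k ∧ k < 2 ^ (A + 1)
  · rw [if_pos h]; exact ec_abs _ _
  · rw [if_neg h]; norm_num

variable (AA : ℕ → ℕ)

/-- the final function, depending on a choice of block sizes -/
def FF : G × G → ℝ := fun q => ∑' j, (4:ℝ)⁻¹ ^ j * (pfun (AA j) q.1 * pfun (AA j) q.2)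

lemma summable_quarter : Summable (fun j : ℕ => (4:ℝ)⁻¹ ^ j) :=
  summable_geometric_of_lt_one (by norm_num) (by norm_num)

lemma FF_term_bound (hAA : ∀ j, 1 ≤ AA j) (j : ℕ) (q : G × G) :
    ‖(4:ℝ)⁻¹ ^ j * (pfun (AA j) q.1 * pfun (AA j) q.2)‖ ≤ (4:ℝ)⁻¹ ^ j := by
  rw [Real.norm_eq_abs, abs_mul, abs_mul]
  have h1 := pfun_abs (hAA j) q.1
  have h2 := pfun_abs (hAA j) q.2
  have h3 : |(4:ℝ)⁻¹ ^ j| = (4:ℝ)⁻¹ ^ j := abs_of_nonneg (by positivity)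
  rw [h3]
  have h4 : |pfun (AA j) q.1| * |pfun (AA j) q.2| ≤ 1 :=
    mul_le_one₀ h1 (abs_nonneg _) h2
  have h5 := mul_le_of_le_one_right (pow_nonneg (by norm_num : (0:ℝ) ≤ 4⁻¹) j) h4
  linarith

lemma FF_continuous (hAA : ∀ j, 1 ≤ AA j) : Continuous (FF AA) := by
  apply continuous_tsum
  · intro j
    exact (continuous_const.mul (((pfun_cont (AA j)).comp continuous_fst).mul
      ((pfun_cont (AA j)).comp continuous_snd)))
  · exact summable_quarter
  · exact FF_term_bound AA hAA

lemma FF_zero (hAA : ∀ j, 1 ≤ AA j) : FF AA (0, 0) = 0 := by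
  rw [FF]
  have : ∀ j : ℕ, (4:ℝ)⁻¹ ^ j * (pfun (AA j) (0,0).1 * pfun (AA j) (0,0).2) = 0 := by
    intro j
    rw [show ((0,0) : G × G).1 = 0 from rfl, pfun_zero (hAA j)]
    ring
  rw [tsum_congr this, tsum_zero]

lemma FF_coeff (hAA : ∀ j, 1 ≤ AA j) (k i : ℕ) :
    kaczCoeff2 (FF AA) k i = ∑' j, (4:ℝ)⁻¹ ^ j * (cc (AA j) k * cc (AA j) i) := by
  rw [kaczCoeff2]
  have hptw : ∀ q : G × G, FF AA q * kaczmarz k q.1 * kaczmarz i q.2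
      = ∑' j, ((4:ℝ)⁻¹ ^ j * (pfun (AA j) q.1 * pfun (AA j) q.2))
          * kaczmarz k q.1 * kaczmarz i q.2 := by
    intro q
    rw [FF, ← tsum_mul_right, ← tsum_mul_right]
  rw [show (fun q : G × G => FF AA q * kaczmarz k q.1 * kaczmarz i q.2) = _ from funext hptw]
  rw [MeasureTheory.integral_tsum]
  · apply tsum_congr
    intro j
    have hrw : ∀ q : G × G,
        ((4:ℝ)⁻¹ ^ j * (pfun (AA j) q.1 * pfun (AA j) q.2))
          * kaczmarz k q.1 * kaczmarz i q.2
        = (pfun (AA j) q.1 * kaczmarz k q.1)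
          * ((4:ℝ)⁻¹ ^ j * (pfun (AA j) q.2 * kaczmarz i q.2)) := by
      intro q; ring
    rw [show (fun q : G × G => ((4:ℝ)⁻¹ ^ j * (pfun (AA j) q.1 * pfun (AA j) q.2))
          * kaczmarz k q.1 * kaczmarz i q.2) = _ from funext hrw]
    rw [μG2, MeasureTheory.integral_prod_mul (μ := μG) (ν := μG)
      (f := fun x => pfun (AA j) x * kaczmarz k x)
      (g := fun y => (4:ℝ)⁻¹ ^ j * (pfun (AA j) y * kaczmarz i y))]
    rw [integral_const_mul, integral_pfun_kacz, integral_pfun_kacz]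
    ring
  · intro j
    apply Continuous.aestronglyMeasurable
    exact ((continuous_const.mul (((pfun_cont (AA j)).comp continuous_fst).mul
      ((pfun_cont (AA j)).comp continuous_snd))).mul
      ((kacz_continuous k).comp continuous_fst)).mul
      ((kacz_continuous i).comp continuous_snd)
  · have hb : ∀ j : ℕ, (∫⁻ q, ‖((4:ℝ)⁻¹ ^ j * (pfun (AA j) q.1 * pfun (AA j) q.2))
        * kaczmarz k q.1 * kaczmarz i q.2‖₊ ∂μG2) ≤ ENNReal.ofReal ((4:ℝ)⁻¹ ^ j) := by
      intro j
      have hptb : ∀ q : G × G, (‖((4:ℝ)⁻¹ ^ j * (pfun (AA j) q.1 * pfun (AA j) q.2))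
          * kaczmarz k q.1 * kaczmarz i q.2‖₊ : ENNReal) ≤ ENNReal.ofReal ((4:ℝ)⁻¹ ^ j) := by
        intro q
        rw [← enorm_eq_nnnorm, ← ofReal_norm]
        apply ENNReal.ofReal_le_ofReal
        rw [norm_mul, norm_mul]
        have h1 := FF_term_bound AA hAA j q
        have h2 : ‖kaczmarz k q.1‖ = 1 := by rw [Real.norm_eq_abs, kacz_abs]
        have h3 : ‖kaczmarz i q.2‖ = 1 := by rw [Real.norm_eq_abs, kacz_abs]
        rw [h2, h3, mul_one, mul_one]
        exact h1
      calc ∫⁻ q, ‖((4:ℝ)⁻¹ ^ j * (pfun (AA j) q.1 * pfun (AA j) q.2))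
            * kaczmarz k q.1 * kaczmarz i q.2‖₊ ∂μG2
          ≤ ∫⁻ _, ENNReal.ofReal ((4:ℝ)⁻¹ ^ j) ∂μG2 := lintegral_mono hptb
        _ = ENNReal.ofReal ((4:ℝ)⁻¹ ^ j) := by
            rw [MeasureTheory.lintegral_const, measure_univ, mul_one]
    apply ne_top_of_le_ne_top (b := ∑' j : ℕ, ENNReal.ofReal ((4:ℝ)⁻¹ ^ j))
    · have : ∀ j : ℕ, ENNReal.ofReal ((4:ℝ)⁻¹ ^ j) = (ENNReal.ofReal (4:ℝ)⁻¹) ^ j := by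
        intro j
        rw [ENNReal.ofReal_pow (by norm_num)]
      rw [tsum_congr this, ENNReal.tsum_geometric]
      apply ENNReal.inv_ne_top.2
      intro h0
      rw [tsub_eq_zero_iff_le] at h0
      have : ENNReal.ofReal (4:ℝ)⁻¹ < 1 := by
        rw [← ENNReal.ofReal_one]
        exact ENNReal.ofReal_lt_ofReal_iff_of_nonneg (by norm_num) |>.2 (by norm_num)
      exact absurd h0 (not_le.2 this)
    · exact ENNReal.tsum_le_tsum hb

end TheFunction
noncomputable section PartialSums

variable (AA : ℕ → ℕ)

lemma summable_term (k i : ℕ) :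
    Summable (fun j => (4:ℝ)⁻¹ ^ j * (cc (AA j) k * cc (AA j) i)) := by
  apply Summable.of_norm_bounded summable_quarter
  intro j
  rw [Real.norm_eq_abs, abs_mul, abs_mul]
  have h1 := cc_abs (AA j) k
  have h2 := cc_abs (AA j) i
  have h3 : |(4:ℝ)⁻¹ ^ j| = (4:ℝ)⁻¹ ^ j := abs_of_nonneg (by positivity)
  rw [h3]
  have h4 : |cc (AA j) k| * |cc (AA j) i| ≤ 1 := mul_le_one₀ h1 (abs_nonneg _) h2
  have h5 := mul_le_of_le_one_right (pow_nonneg (by norm_num : (0:ℝ) ≤ 4⁻¹) j) h4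
  linarith

lemma FF_partial (hAA : ∀ j, 1 ≤ AA j) (l : ℕ) :
    kaczPartialSum2 l l (FF AA) (0, 0)
      = ∑' j, (4:ℝ)⁻¹ ^ j * ((∑ k ∈ Finset.range l, cc (AA j) k)
          * (∑ i ∈ Finset.range l, cc (AA j) i)) := by
  rw [kaczPartialSum2]
  have h0 : ∀ k i : ℕ,
      kaczCoeff2 (FF AA) k i * kaczmarz k ((0,0) : G × G).1 * kaczmarz i ((0,0) : G × G).2
      = ∑' j, (4:ℝ)⁻¹ ^ j * (cc (AA j) k * cc (AA j) i) := by
    intro k i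
    rw [show (((0,0) : G × G)).1 = 0 from rfl, show (((0,0) : G × G)).2 = 0 from rfl,
      kacz_at_zero, kacz_at_zero, mul_one, mul_one, FF_coeff AA hAA]
  have hstep1 : ∀ k : ℕ,
      ∑ i ∈ Finset.range l,
        (kaczCoeff2 (FF AA) k i * kaczmarz k ((0,0) : G × G).1
          * kaczmarz i ((0,0) : G × G).2)
      = ∑' j, ∑ i ∈ Finset.range l, (4:ℝ)⁻¹ ^ j * (cc (AA j) k * cc (AA j) i) := by
    intro k
    rw [Finset.sum_congr rfl (fun i _ => h0 k i)]
    exact (Summable.tsum_finsetSum (fun i _ => summable_term AA k i)).symm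
  rw [Finset.sum_congr rfl (fun k _ => hstep1 k)]
  rw [← Summable.tsum_finsetSum (fun k _ => (summable_sum (fun i _ => summable_term AA k i)))]
  apply tsum_congr
  intro j
  rw [Finset.sum_mul_sum]
  simp only [← Finset.mul_sum]

lemma FF_value (hAA : ∀ j, 1 ≤ AA j) (hmono : StrictMono AA) (j0 : ℕ) :
    kaczPartialSum2 (2 ^ AA j0 + rhostar (AA j0)) (2 ^ AA j0 + rhostar (AA j0))
        (FF AA) (0, 0)
      = (4:ℝ)⁻¹ ^ j0 * (yy (AA j0)) ^ 2 := by
  rw [FF_partial AA hAA]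
  rw [tsum_eq_single j0 ?hz]
  · rw [sum_cc_mid (le_of_lt (rhostar_lt _)), ← yy]; ring
  case hz =>
    intro j hj
    rcases lt_or_gt_of_ne hj with h | h
    · -- j < j0 : the whole block of `j` lies below the cut
      have hle : 2 ^ (AA j + 1) ≤ 2 ^ AA j0 + rhostar (AA j0) := by
        have : AA j + 1 ≤ AA j0 := hmono h
        have := Nat.pow_le_pow_right (by norm_num : 1 ≤ 2) this
        omega
      rw [sum_cc_high (hAA j) hle]
      ring
    · -- j0 < j : the cut is below the block of `j`
      have hle : 2 ^ AA j0 + rhostar (AA j0) ≤ 2 ^ AA j := by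
        have h1 : AA j0 + 1 ≤ AA j := hmono h
        have h2 := rhostar_lt (AA j0)
        have h3 : (2:ℕ) ^ (AA j0 + 1) ≤ 2 ^ AA j := Nat.pow_le_pow_right (by norm_num) h1
        have h4 : (2:ℕ) ^ (AA j0 + 1) = 2 * 2 ^ AA j0 := by ring
        omega
      rw [sum_cc_low hle]
      ring

end PartialSums
section Assembly

open Real

/-- Theorem 2 b). -/
theorem statement2 (φ : ℝ → ℝ) (hφ : PsiClass φ)
    (hlim : ∀ C : ℝ, ∃ᶠ u in atTop, C < φ u / Real.sqrt u) :
    ∃ F : G × G → ℝ, Continuous F ∧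
      ∀ C : ℝ, ∃ᶠ m : ℕ in atTop, C <
        (1 / (m : ℝ)) * ∑ l ∈ Finset.Icc 1 m,
          (Real.exp (φ |kaczPartialSum2 l l F (0, 0) - F (0, 0)|) - 1) := by
  obtain ⟨hφmono, hφ0, -⟩ := hφ
  -- the target constants
  set Cs : ℕ → ℝ := fun j => 3 * 2 ^ j + Real.log (j + 1) + 3 with hCs
  -- choose the sequence of `u`'s
  have H : ∀ (j : ℕ) (b : ℝ), ∃ v : ℝ, b ≤ v ∧ 1 ≤ v ∧ Cs j * Real.sqrt v < φ v := by
    intro j b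
    obtain ⟨v, hvb, hv⟩ := (frequently_atTop.1 (hlim (Cs j))) (max b 1)
    refine ⟨v, le_trans (le_max_left _ _) hvb, le_trans (le_max_right _ _) hvb, ?_⟩
    have hv1 : (1:ℝ) ≤ v := le_trans (le_max_right _ _) hvb
    have hv0 : (0:ℝ) < Real.sqrt v := Real.sqrt_pos.2 (by linarith)
    exact (lt_div_iff₀ hv0).1 hv
  choose uf huf1 huf2 huf3 using H
  set u : ℕ → ℝ := fun j => Nat.rec (motive := fun _ => ℝ) (uf 0 1)
    (fun n prev => uf (n + 1) prev) j with hudef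
  have hu0 : u 0 = uf 0 1 := rfl
  have husucc : ∀ n, u (n + 1) = uf (n + 1) (u n) := fun n => rfl
  have hu1 : ∀ j, 1 ≤ u j := by
    intro j
    cases j with
    | zero => rw [hu0]; exact huf2 0 1
    | succ n => rw [husucc n]; exact huf2 (n + 1) (u n)
  have hphiu : ∀ j, Cs j * Real.sqrt (u j) < φ (u j) := by
    intro j
    cases j with
    | zero => rw [hu0]; exact huf3 0 1
    | succ n => rw [husucc n]; exact huf3 (n + 1) (u n)
  have humono : ∀ j, u j ≤ u (j + 1) := by
    intro j
    rw [husucc j]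
    exact huf1 (j + 1) (u j)
  -- basic square-root facts
  have hs1 : ∀ j, 1 ≤ Real.sqrt (u j) := by
    intro j
    have := Real.sqrt_le_sqrt (hu1 j)
    rwa [Real.sqrt_one] at this
  have hs0 : ∀ j, 0 ≤ Real.sqrt (u j) := fun j => Real.sqrt_nonneg _
  have hsmono : ∀ j, Real.sqrt (u j) ≤ Real.sqrt (u (j + 1)) :=
    fun j => Real.sqrt_le_sqrt (humono j)
  -- the block sizes
  set Bc : ℕ → ℕ := fun j => ⌈(2:ℝ) ^ (j + 1) * Real.sqrt (u j)⌉₊ with hBcdef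
  set AA : ℕ → ℕ := fun j => 2 * Bc j + 1 with hAAdef
  have hBcge : ∀ j, (2:ℝ) ^ (j + 1) * Real.sqrt (u j) ≤ (Bc j : ℝ) := fun j => Nat.le_ceil _
  have hBcle : ∀ j, (Bc j : ℝ) < (2:ℝ) ^ (j + 1) * Real.sqrt (u j) + 1 := by
    intro j
    exact Nat.ceil_lt_add_one (by positivity)
  have h2j1 : ∀ j : ℕ, (2:ℝ) ≤ (2:ℝ) ^ (j + 1) := by
    intro j
    calc (2:ℝ) = 2 ^ 1 := by norm_num
    _ ≤ 2 ^ (j + 1) := by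
        apply pow_le_pow_right₀ (by norm_num)
        omega
  have hAAj : ∀ j, AA j = 2 * Bc j + 1 := fun _ => rfl
  have hAA1 : ∀ j, 1 ≤ AA j := by intro j; rw [hAAj]; omega
  have hmonoAA : StrictMono AA := by
    apply strictMono_nat_of_lt_succ
    intro j
    have key : Bc j < Bc (j + 1) := by
      have hx2 : (2:ℝ) ≤ (2:ℝ) ^ (j + 1) * Real.sqrt (u j) := by
        have := hs1 j
        nlinarith [h2j1 j]
      have hdouble : (2:ℝ) * ((2:ℝ) ^ (j + 1) * Real.sqrt (u j))
          ≤ (2:ℝ) ^ (j + 2) * Real.sqrt (u (j + 1)) := by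
        have h1 : (2:ℝ) ^ (j + 2) = 2 * 2 ^ (j + 1) := by ring
        rw [h1, mul_assoc]
        have := hsmono j
        nlinarith [hs0 j, pow_nonneg (by norm_num : (0:ℝ) ≤ 2) (j + 1)]
      have : (Bc j : ℝ) < (Bc (j + 1) : ℝ) := by
        calc (Bc j : ℝ) < (2:ℝ) ^ (j + 1) * Real.sqrt (u j) + 1 := hBcle j
        _ ≤ 2 * ((2:ℝ) ^ (j + 1) * Real.sqrt (u j)) := by linarith [hx2]
        _ ≤ (2:ℝ) ^ (j + 2) * Real.sqrt (u (j + 1)) := hdouble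
        _ ≤ (Bc (j + 1) : ℝ) := hBcge (j + 1)
      exact_mod_cast this
    rw [hAAj, hAAj]
    omega
  -- the sequence of special indices
  set m : ℕ → ℕ := fun j => 2 ^ AA j + rhostar (AA j) with hmdef
  have hmeq : ∀ j, m j = 2 ^ AA j + rhostar (AA j) := fun _ => rfl
  have hm1 : ∀ j, 1 ≤ m j := by
    intro j
    rw [hmeq]
    have : 0 < 2 ^ AA j := Nat.pow_pos (by norm_num)
    omega
  have hmlt : ∀ j, m j < 2 ^ (AA j + 1) := by
    intro j
    rw [hmeq]
    have hr := rhostar_lt (AA j)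
    have he : (2:ℕ) ^ (AA j + 1) = 2 * 2 ^ AA j := by ring
    omega
  have hBcj : ∀ j, j + 1 ≤ Bc j := by
    intro j
    have h1 : ((2:ℕ) ^ (j + 1) : ℝ) ≤ (Bc j : ℝ) := by
      push_cast
      calc ((2:ℝ) ^ (j + 1)) = 2 ^ (j + 1) * 1 := by ring
      _ ≤ 2 ^ (j + 1) * Real.sqrt (u j) := by
          apply mul_le_mul_of_nonneg_left (hs1 j) (by positivity)
      _ ≤ (Bc j : ℝ) := hBcge j
    have h2 : (2:ℕ) ^ (j + 1) ≤ Bc j := by exact_mod_cast h1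
    have h3 : j + 1 < 2 ^ (j + 1) := Nat.lt_two_pow_self
    omega
  have hmj : ∀ j, j ≤ m j := by
    intro j
    have h1 : AA j < 2 ^ AA j := Nat.lt_two_pow_self
    have h2 := hBcj j
    have h3 : j ≤ AA j := by rw [hAAj]; omega
    rw [hmeq]
    omega
  -- the function
  refine ⟨FF AA, FF_continuous AA hAA1, ?_⟩
  intro C
  rw [frequently_atTop]
  intro b
  -- pick the stage
  obtain ⟨j, hjb, hjC⟩ : ∃ j : ℕ, b ≤ j ∧ C < (j : ℝ) := by
    rcases le_or_gt 0 C with hC0 | hC0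
    · refine ⟨max b (⌈C⌉₊ + 1), le_max_left _ _, ?_⟩
      have h1 : C ≤ (⌈C⌉₊ : ℝ) := Nat.le_ceil C
      have h2 : (⌈C⌉₊ + 1 : ℕ) ≤ max b (⌈C⌉₊ + 1) := le_max_right _ _
      have h3 : ((⌈C⌉₊ + 1 : ℕ) : ℝ) ≤ ((max b (⌈C⌉₊ + 1) : ℕ) : ℝ) := by exact_mod_cast h2
      have h4 : ((⌈C⌉₊ : ℕ) : ℝ) + 1 ≤ ((max b (⌈C⌉₊ + 1) : ℕ) : ℝ) := by push_cast at h3 ⊢; linarith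
      linarith
    · exact ⟨b, le_refl b, lt_of_lt_of_le hC0 (Nat.cast_nonneg b)⟩
  refine ⟨m j, le_trans hjb (hmj j), ?_⟩
  -- the value of the partial sum at the special index
  have hval : kaczPartialSum2 (m j) (m j) (FF AA) (0, 0) - FF AA (0, 0)
      = (4:ℝ)⁻¹ ^ j * (yy (AA j)) ^ 2 := by
    rw [FF_zero AA hAA1, sub_zero, hmeq]
    exact FF_value AA hAA1 hmonoAA j
  -- lower bound for the value
  have hyy : (Bc j : ℝ) / 2 ≤ yy (AA j) := by
    rw [hAAj]
    exact yy_odd_ge (Bc j)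
  have hΔge : u j ≤ (4:ℝ)⁻¹ ^ j * (yy (AA j)) ^ 2 := by
    have h1 : (2:ℝ) ^ j * Real.sqrt (u j) ≤ yy (AA j) := by
      have : (2:ℝ) ^ (j + 1) * Real.sqrt (u j) / 2 = 2 ^ j * Real.sqrt (u j) := by
        rw [pow_succ]; ring
      calc (2:ℝ) ^ j * Real.sqrt (u j) = (2:ℝ) ^ (j + 1) * Real.sqrt (u j) / 2 := this.symm
      _ ≤ (Bc j : ℝ) / 2 := by linarith [hBcge j]
      _ ≤ yy (AA j) := hyy
    have h2 : ((2:ℝ) ^ j * Real.sqrt (u j)) ^ 2 ≤ (yy (AA j)) ^ 2 := by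
      apply pow_le_pow_left₀ (by positivity) h1
    have h3 : ((2:ℝ) ^ j * Real.sqrt (u j)) ^ 2 = 4 ^ j * u j := by
      rw [mul_pow, Real.sq_sqrt (by linarith [hu1 j])]
      congr 1
      rw [← pow_mul, mul_comm j 2, pow_mul]
      norm_num
    have h4 : (4:ℝ)⁻¹ ^ j * (4:ℝ) ^ j = 1 := by
      rw [← mul_pow]
      norm_num
    calc u j = (4:ℝ)⁻¹ ^ j * (4 ^ j * u j) := by
          rw [← mul_assoc, h4, one_mul]
    _ ≤ (4:ℝ)⁻¹ ^ j * (yy (AA j)) ^ 2 := by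
        apply mul_le_mul_of_nonneg_left _ (by positivity)
        rw [← h3]
        exact h2
  -- the exponential bound
  have hlogbound : Real.log (((j : ℝ) + 1) * (m j : ℝ)) ≤ Cs j * Real.sqrt (u j) := by
    have hmpos : (0:ℝ) < (m j : ℝ) := by exact_mod_cast hm1 j
    have hj1pos : (0:ℝ) < (j : ℝ) + 1 := by positivity
    rw [Real.log_mul (ne_of_gt hj1pos) (ne_of_gt hmpos)]
    have hlog2 : Real.log 2 ≤ 0.7 := by
      have := Real.log_two_lt_d9
      linarith
    have hlogm : Real.log (m j : ℝ) ≤ ((AA j : ℝ) + 1) * Real.log 2 := by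
      have h1 : (m j : ℝ) ≤ (2:ℝ) ^ (AA j + 1) := by
        have := hmlt j
        have h2 : ((m j : ℕ) : ℝ) ≤ ((2 ^ (AA j + 1) : ℕ) : ℝ) := by exact_mod_cast this.le
        rwa [Nat.cast_pow, Nat.cast_ofNat] at h2
      calc Real.log (m j : ℝ) ≤ Real.log ((2:ℝ) ^ (AA j + 1)) :=
            Real.log_le_log hmpos h1
      _ = ((AA j : ℝ) + 1) * Real.log 2 := by
          rw [Real.log_pow]
          push_cast
          ring
    have hAAval : (AA j : ℝ) = 2 * (Bc j : ℝ) + 1 := by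
      rw [hAAj]; push_cast; ring
    have hlognn : 0 ≤ Real.log ((j : ℝ) + 1) := Real.log_nonneg (by linarith)
    have hlog2nn : 0 ≤ Real.log 2 := Real.log_nonneg (by norm_num)
    have hBB := hBcle j
    have hss := hs1 j
    have h2jnn : (1:ℝ) ≤ 2 ^ j := one_le_pow₀ (by norm_num)
    have hp : (2:ℝ) ^ (j + 1) = 2 * 2 ^ j := by ring
    rw [hp] at hBB
    -- combine
    have hAA2 : (AA j : ℝ) + 1 ≤ 4 * (2 ^ j * Real.sqrt (u j)) + 4 := by
      rw [hAAval]
      linarith [hBB]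
    have hAApos : (0:ℝ) ≤ (AA j : ℝ) + 1 := by positivity
    have hlogm2 : Real.log (m j : ℝ) ≤ 0.7 * (4 * (2 ^ j * Real.sqrt (u j)) + 4) := by
      have e1 : ((AA j : ℝ) + 1) * Real.log 2 ≤ ((AA j : ℝ) + 1) * 0.7 :=
        mul_le_mul_of_nonneg_left hlog2 hAApos
      have e2 : ((AA j : ℝ) + 1) * 0.7 ≤ (4 * (2 ^ j * Real.sqrt (u j)) + 4) * 0.7 :=
        mul_le_mul_of_nonneg_right hAA2 (by norm_num)
      linarith [hlogm]
    have hCsj : Cs j = 3 * 2 ^ j + Real.log ((j : ℝ) + 1) + 3 := rfl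
    rw [hCsj]
    have ht : (1:ℝ) * 1 ≤ 2 ^ j * Real.sqrt (u j) :=
      mul_le_mul h2jnn hss zero_le_one (le_trans zero_le_one h2jnn)
    have hq1 : Real.log ((j : ℝ) + 1) * 1 ≤ Real.log ((j : ℝ) + 1) * Real.sqrt (u j) :=
      mul_le_mul_of_nonneg_left hss hlognn
    linarith [hlogm2, hq1, ht, hss, hlognn]
  have hexp : ((j : ℝ) + 1) * (m j : ℝ) ≤ Real.exp (φ (u j)) := by
    have hmpos : (0:ℝ) < (m j : ℝ) := by exact_mod_cast hm1 j
    have hpos : (0:ℝ) < ((j : ℝ) + 1) * (m j : ℝ) := by positivity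
    calc ((j : ℝ) + 1) * (m j : ℝ) = Real.exp (Real.log (((j : ℝ) + 1) * (m j : ℝ))) :=
          (Real.exp_log hpos).symm
    _ ≤ Real.exp (φ (u j)) := by
        apply Real.exp_le_exp.2
        calc Real.log (((j : ℝ) + 1) * (m j : ℝ)) ≤ Cs j * Real.sqrt (u j) := hlogbound
        _ ≤ φ (u j) := (hphiu j).le
  -- monotonicity of φ
  have hphimono : φ (u j) ≤ φ |kaczPartialSum2 (m j) (m j) (FF AA) (0, 0) - FF AA (0, 0)| := by
    rw [hval]
    have h1 : u j ≤ |(4:ℝ)⁻¹ ^ j * (yy (AA j)) ^ 2| := by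
      rw [abs_of_nonneg (by positivity)]
      exact hΔge
    apply hφmono (Set.mem_Ici.2 (by linarith [hu1 j])) (Set.mem_Ici.2 (abs_nonneg _)) h1
  -- all terms are nonnegative
  have hterm_nonneg : ∀ l : ℕ,
      0 ≤ Real.exp (φ |kaczPartialSum2 l l (FF AA) (0, 0) - FF AA (0, 0)|) - 1 := by
    intro l
    have h1 : 0 ≤ φ |kaczPartialSum2 l l (FF AA) (0, 0) - FF AA (0, 0)| := by
      rw [← hφ0]
      apply hφmono (Set.mem_Ici.2 (le_refl 0)) (Set.mem_Ici.2 (abs_nonneg _)) (abs_nonneg _)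
    have := Real.one_le_exp h1
    linarith
  -- the sum is at least the single term at l = m j
  have hsum : Real.exp (φ |kaczPartialSum2 (m j) (m j) (FF AA) (0, 0) - FF AA (0, 0)|) - 1
      ≤ ∑ l ∈ Finset.Icc 1 (m j),
        (Real.exp (φ |kaczPartialSum2 l l (FF AA) (0, 0) - FF AA (0, 0)|) - 1) := by
    apply Finset.single_le_sum (f := fun l =>
      Real.exp (φ |kaczPartialSum2 l l (FF AA) (0, 0) - FF AA (0, 0)|) - 1)
    · intro l _
      exact hterm_nonneg l
    · rw [Finset.mem_Icc]
      exact ⟨hm1 j, le_refl _⟩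
  -- conclude
  have hmpos : (0:ℝ) < (m j : ℝ) := by exact_mod_cast hm1 j
  have hchain : ((j : ℝ)) * (m j : ℝ)
      ≤ Real.exp (φ |kaczPartialSum2 (m j) (m j) (FF AA) (0, 0) - FF AA (0, 0)|) - 1 := by
    have h1 := Real.exp_le_exp.2 hphimono
    have h2 : ((j : ℝ) + 1) * (m j : ℝ) ≤ Real.exp
        (φ |kaczPartialSum2 (m j) (m j) (FF AA) (0, 0) - FF AA (0, 0)|) :=
      le_trans hexp h1
    have hm1R : (1:ℝ) ≤ (m j : ℝ) := by exact_mod_cast hm1 j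
    have hexpand : ((j : ℝ) + 1) * (m j : ℝ) = (j : ℝ) * (m j : ℝ) + (m j : ℝ) := by ring
    linarith
  have hfinal : (j : ℝ) ≤ (1 / (m j : ℝ)) * ∑ l ∈ Finset.Icc 1 (m j),
      (Real.exp (φ |kaczPartialSum2 l l (FF AA) (0, 0) - FF AA (0, 0)|) - 1) := by
    have h1 : ((j : ℝ)) * (m j : ℝ) ≤ ∑ l ∈ Finset.Icc 1 (m j),
        (Real.exp (φ |kaczPartialSum2 l l (FF AA) (0, 0) - FF AA (0, 0)|) - 1) :=
      le_trans hchain hsum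
    have h2 : (1 / (m j : ℝ)) * (((j : ℝ)) * (m j : ℝ)) = (j : ℝ) := by
      field_simp
    calc (j : ℝ) = (1 / (m j : ℝ)) * (((j : ℝ)) * (m j : ℝ)) := h2.symm
    _ ≤ (1 / (m j : ℝ)) * ∑ l ∈ Finset.Icc 1 (m j),
        (Real.exp (φ |kaczPartialSum2 l l (FF AA) (0, 0) - FF AA (0, 0)|) - 1) := by
        apply mul_le_mul_of_nonneg_left h1 (by positivity)
  exact lt_of_lt_of_le hjC hfinal

end Assembly
end

section
/- For every A∈ℕ, every integer j with 0≤j<2^A, and every x∈G: D_{2^A+j}^κ(x) = D_{2^A}^w(x) + r_A(x)·D_j^w(τ_A(x)). -/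
open MeasureTheory Filter

lemma walsh_eq_prod (n N : ℕ) (h : n < 2 ^ N) (x : G) :
    walsh n x = ∏ k ∈ Finset.range N, if n.testBit k then rademacher k x else 1 := by
  unfold walsh
  refine Finset.prod_subset (by simpa [Finset.range_subset_range, Nat.size_le] using h) ?_
  intro k _ hk
  simp only [Finset.mem_range, not_lt] at hk
  rw [Nat.testBit_eq_false_of_lt (lt_of_lt_of_le (Nat.lt_size_self n) (Nat.pow_le_pow_right (by norm_num) hk))]
  simp

lemma walsh_two_pow_add (A m : ℕ) (hm : m < 2 ^ A) (x : G) :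
    walsh (2 ^ A + m) x = rademacher A x * walsh m x := by
  have h2 : 2 ^ A + m < 2 ^ (A + 1) := by rw [pow_succ]; omega
  rw [walsh_eq_prod _ (A+1) h2, Finset.prod_range_succ, walsh_eq_prod m A hm,
    Nat.testBit_two_pow_add_eq, Nat.testBit_eq_false_of_lt hm]
  rw [mul_comm]
  simp only [Bool.not_false, if_true]
  congr 1
  exact Finset.prod_congr rfl fun k hk => by
    rw [Nat.testBit_two_pow_add_gt (Finset.mem_range.mp hk)]

lemma rademacher_tau (A k : ℕ) (hk : k < A) (x : G) :
    rademacher k (tau A x) = rademacher (A - 1 - k) x := by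
  simp [rademacher, tau, hk]

lemma kacz_two_pow_add (A m : ℕ) (hm : m < 2 ^ A) (x : G) :
    kaczmarz (2 ^ A + m) x = rademacher A x * walsh m (tau A x) := by
  have hlog : Nat.log 2 (2 ^ A + m) = A :=
    Nat.log_eq_of_pow_le_of_lt_pow (Nat.le_add_right _ _) (by rw [pow_succ]; omega)
  rw [kaczmarz, if_neg (by positivity), hlog, walsh_eq_prod m A hm (tau A x)]
  congr 1
  refine Finset.prod_congr rfl fun k hk => ?_
  have hk' := Finset.mem_range.mp hk
  rw [Nat.testBit_two_pow_add_gt hk', rademacher_tau A k hk']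

lemma walshDirichlet_two_pow (A : ℕ) (x : G) :
    walshDirichlet (2 ^ A) x = ∏ i ∈ Finset.range A, (1 + rademacher i x) := by
  induction A with
  | zero => simp [walshDirichlet, walsh, Nat.size]
  | succ A ih =>
    rw [Finset.prod_range_succ, ← ih]
    have : (2:ℕ) ^ (A+1) = 2 ^ A + 2 ^ A := by rw [pow_succ]; omega
    rw [walshDirichlet, this, Finset.sum_range_add]
    have : ∑ m ∈ Finset.range (2 ^ A), walsh (2 ^ A + m) x
        = rademacher A x * walshDirichlet (2 ^ A) x := by
      rw [walshDirichlet, Finset.mul_sum]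
      exact Finset.sum_congr rfl fun m hm =>
        walsh_two_pow_add A m (Finset.mem_range.mp hm) x
    rw [this, walshDirichlet]; ring

lemma walshDirichlet_two_pow_tau (A : ℕ) (x : G) :
    walshDirichlet (2 ^ A) (tau A x) = walshDirichlet (2 ^ A) x := by
  rw [walshDirichlet_two_pow, walshDirichlet_two_pow]
  calc ∏ i ∈ Finset.range A, (1 + rademacher i (tau A x))
      = ∏ i ∈ Finset.range A, (1 + rademacher (A - 1 - i) x) :=
        Finset.prod_congr rfl fun i hi => by
          rw [rademacher_tau A i (Finset.mem_range.mp hi)]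
    _ = _ := Finset.prod_range_reflect (fun i => 1 + rademacher i x) A

lemma kaczDirichlet_two_pow (A : ℕ) (x : G) :
    kaczDirichlet (2 ^ A) x = walshDirichlet (2 ^ A) x := by
  induction A with
  | zero => simp [kaczDirichlet, walshDirichlet, kaczmarz, walsh, Nat.size]
  | succ A ih =>
    have h2 : (2:ℕ) ^ (A+1) = 2 ^ A + 2 ^ A := by rw [pow_succ]; omega
    rw [kaczDirichlet, walshDirichlet, h2, Finset.sum_range_add, Finset.sum_range_add]
    rw [show ∑ k ∈ Finset.range (2^A), kaczmarz k x = kaczDirichlet (2^A) x from rfl, ih]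
    congr 1
    calc ∑ m ∈ Finset.range (2 ^ A), kaczmarz (2 ^ A + m) x
        = ∑ m ∈ Finset.range (2 ^ A), rademacher A x * walsh m (tau A x) :=
          Finset.sum_congr rfl fun m hm =>
            kacz_two_pow_add A m (Finset.mem_range.mp hm) x
      _ = rademacher A x * walshDirichlet (2 ^ A) (tau A x) := by
          rw [walshDirichlet, Finset.mul_sum]
      _ = rademacher A x * walshDirichlet (2 ^ A) x := by
          rw [walshDirichlet_two_pow_tau]
      _ = ∑ m ∈ Finset.range (2 ^ A), walsh (2 ^ A + m) x := by
          rw [walshDirichlet, Finset.mul_sum]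
          exact (Finset.sum_congr rfl fun m hm =>
            walsh_two_pow_add A m (Finset.mem_range.mp hm) x).symm

/-- Skvortsov's identity for Walsh-Kaczmarz Dirichlet kernels. -/
theorem statement14 (A : ℕ) (j : ℕ) (hj : j < 2 ^ A) (x : G) :
    kaczDirichlet (2 ^ A + j) x
      = walshDirichlet (2 ^ A) x + rademacher A x * walshDirichlet j (tau A x) := by
  rw [kaczDirichlet, Finset.sum_range_add,
    show ∑ k ∈ Finset.range (2^A), kaczmarz k x = kaczDirichlet (2^A) x from rfl,
    kaczDirichlet_two_pow]
  congr 1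
  calc ∑ m ∈ Finset.range j, kaczmarz (2 ^ A + m) x
      = ∑ m ∈ Finset.range j, rademacher A x * walsh m (tau A x) :=
        Finset.sum_congr rfl fun m hm =>
          kacz_two_pow_add A m (lt_of_lt_of_le (Finset.mem_range.mp hm) hj.le) x
    _ = _ := by rw [walshDirichlet, Finset.mul_sum]
end
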